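/- Let K > 0, δ > 1, and let a < b be real numbers with b − a < 2π. Let h : ℝ → ℝ be continuously differentiable on [a,b] with h(a) = h(b) = 0, h'(a) > 0, h'(b) < 0 and h(x) > 0 for all x ∈ (a,b). Let M be the global maximum value of h on [a,b], attained at x_M ∈ (a,b). Define G(x) = (x + (K/δ)·log h(x), h(x)^(1/δ)) for x ∈ (a,b). Then: (i) the first coordinate of G(x) tends to −∞ as x → a⁺ and as x → b⁻; (ii) the second coordinate of G(x) tends to 0 as x → a⁺ and as x → b⁻; (iii) h(x)^(1/δ) ≤ M^(1/δ) for all x ∈ (a,b), with equality at x = x_M; and (iv) there exists a fold point x_* ∈ (x_M, b) with h(x_*) = −(K/δ)·h'(x_*), at which the derivative of the first coordinate of G vanishes. -/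

import Mathlib

/-- Geometry of the inverse transition map `η⁻¹`: the image
`G(x) = (x + (K/δ)·log h(x), h(x)^(1/δ))` of the graph of `h` is a helix in `In(v)`:
its angular coordinate tends to `-∞` and its height tends to `0` at both endpoints,
its maximum height is `M^(1/δ)`, and it has a fold point `x_* ∈ (x_M, b)` where
`h(x_*) = -(K/δ)·h'(x_*)` and the derivative of the angular coordinate vanishes. -/
theorem stmt_4 (K δ a b : ℝ) (hK : 0 < K) (hδ : 1 < δ) (hab : a < b)
    (hperiod : b - a < 2 * Real.pi)
    (h h' : ℝ → ℝ)
    (hderiv : ∀ x ∈ Set.Icc a b, HasDerivAt h (h' x) x)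
    (hcont : ContinuousOn h' (Set.Icc a b))
    (ha0 : h a = 0) (hb0 : h b = 0)
    (ha' : 0 < h' a) (hb' : h' b < 0)
    (hpos : ∀ x ∈ Set.Ioo a b, 0 < h x)
    (M xM : ℝ) (hxM : xM ∈ Set.Ioo a b) (hMval : h xM = M)
    (hMmax : ∀ x ∈ Set.Icc a b, h x ≤ M) :
    (Filter.Tendsto (fun x => x + (K / δ) * Real.log (h x))
        (nhdsWithin a (Set.Ioo a b)) Filter.atBot ∧
      Filter.Tendsto (fun x => x + (K / δ) * Real.log (h x))
        (nhdsWithin b (Set.Ioo a b)) Filter.atBot) ∧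
    (Filter.Tendsto (fun x => h x ^ (1 / δ)) (nhdsWithin a (Set.Ioo a b)) (nhds 0) ∧
      Filter.Tendsto (fun x => h x ^ (1 / δ)) (nhdsWithin b (Set.Ioo a b)) (nhds 0)) ∧
    ((∀ x ∈ Set.Ioo a b, h x ^ (1 / δ) ≤ M ^ (1 / δ)) ∧ h xM ^ (1 / δ) = M ^ (1 / δ)) ∧
    (∃ xs ∈ Set.Ioo xM b, h xs = -(K / δ) * h' xs ∧
      HasDerivAt (fun x => x + (K / δ) * Real.log (h x)) 0 xs) := by
  have hδ0 : (0:ℝ) < δ := lt_trans one_pos hδ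
  have hKδ : 0 < K / δ := div_pos hK hδ0
  -- tendsto of h at endpoints
  have key : ∀ c ∈ Set.Icc a b, h c = 0 →
      Filter.Tendsto h (nhdsWithin c (Set.Ioo a b)) (nhdsWithin 0 (Set.Ioi 0)) := by
    intro c hc hc0
    rw [tendsto_nhdsWithin_iff]
    refine ⟨?_, Filter.eventually_of_mem self_mem_nhdsWithin fun x hx => hpos x hx⟩
    have := ((hderiv c hc).continuousAt).continuousWithinAt (s := Set.Ioo a b)
    simpa [ContinuousWithinAt, hc0] using this
  have hta := key a ⟨le_refl a, hab.le⟩ ha0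
  have htb := key b ⟨hab.le, le_refl b⟩ hb0
  have ang : ∀ c ∈ Set.Icc a b,
      Filter.Tendsto h (nhdsWithin c (Set.Ioo a b)) (nhdsWithin 0 (Set.Ioi 0)) →
      Filter.Tendsto (fun x => x + (K / δ) * Real.log (h x))
        (nhdsWithin c (Set.Ioo a b)) Filter.atBot := by
    intro c hc ht
    have h1 : Filter.Tendsto (fun x => (K / δ) * Real.log (h x))
        (nhdsWithin c (Set.Ioo a b)) Filter.atBot :=
      (Real.tendsto_log_nhdsGT_zero.comp ht).const_mul_atBot hKδ
    have h2 : Filter.Tendsto (fun x : ℝ => x) (nhdsWithin c (Set.Ioo a b)) (nhds c) :=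
      Filter.tendsto_id.mono_left nhdsWithin_le_nhds
    exact h2.add_atBot h1
  have rp : ∀ c ∈ Set.Icc a b,
      Filter.Tendsto h (nhdsWithin c (Set.Ioo a b)) (nhdsWithin 0 (Set.Ioi 0)) →
      Filter.Tendsto (fun x => h x ^ (1 / δ)) (nhdsWithin c (Set.Ioo a b)) (nhds 0) := by
    intro c hc ht
    have hcont0 : ContinuousAt (fun y : ℝ => y ^ (1 / δ)) 0 :=
      Real.continuousAt_rpow_const 0 (1 / δ) (Or.inr (by positivity))
    have h2 := hcont0.tendsto.comp (ht.mono_right nhdsWithin_le_nhds)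
    rw [Real.zero_rpow (by positivity : (1:ℝ)/δ ≠ 0)] at h2
    exact h2
  refine ⟨⟨ang a ⟨le_refl a, hab.le⟩ hta, ang b ⟨hab.le, le_refl b⟩ htb⟩,
    ⟨rp a ⟨le_refl a, hab.le⟩ hta, rp b ⟨hab.le, le_refl b⟩ htb⟩,
    ⟨fun x hx => Real.rpow_le_rpow (hpos x hx).le
      (hMmax x ⟨hx.1.le, hx.2.le⟩) (by positivity), by rw [hMval]⟩, ?_⟩
  -- fold point
  have hM0 : 0 < M := hMval ▸ hpos xM hxM
  have h'xM : h' xM = 0 := by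
    have hloc : IsLocalMax h xM := by
      have hmem : Set.Icc a b ∈ nhds xM :=
        Icc_mem_nhds hxM.1 hxM.2
      exact Filter.eventually_of_mem hmem fun x hx => (hMmax x hx).trans_eq hMval.symm
    exact hloc.hasDerivAt_eq_zero (hderiv xM ⟨hxM.1.le, hxM.2.le⟩)
  set F : ℝ → ℝ := fun x => δ * h x + K * h' x with hF
  have hFcont : ContinuousOn F (Set.Icc xM b) := by
    have hIcc : Set.Icc xM b ⊆ Set.Icc a b := Set.Icc_subset_Icc hxM.1.le le_rfl
    exact (continuousOn_const.mul (fun x hx =>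
        ((hderiv x (hIcc hx)).continuousAt).continuousWithinAt)).add
      (continuousOn_const.mul (hcont.mono hIcc))
  have hFxM : 0 < F xM := by simp [hF, h'xM, hMval]; positivity
  have hFb : F b < 0 := by
    simp only [hF, hb0, mul_zero, zero_add]
    exact mul_neg_of_pos_of_neg hK hb'
  have : (0:ℝ) ∈ Set.Ioo (F b) (F xM) := ⟨hFb, hFxM⟩
  obtain ⟨xs, hxs, hFxs⟩ := intermediate_value_Ioo' hxM.2.le hFcont this
  have hxsab : xs ∈ Set.Ioo a b := ⟨hxM.1.trans hxs.1, hxs.2⟩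
  have hxspos : 0 < h xs := hpos xs hxsab
  have heq : h xs = -(K / δ) * h' xs := by
    have h0 : δ * h xs + K * h' xs = 0 := hFxs
    field_simp
    linarith
  have hne : h' xs ≠ 0 := by
    intro h0
    rw [heq, h0, mul_zero] at hxspos
    exact lt_irrefl 0 hxspos
  refine ⟨xs, hxs, heq, ?_⟩
  have hd : HasDerivAt (fun x => x + (K / δ) * Real.log (h x))
      (1 + (K / δ) * (h' xs / h xs)) xs := by
    have hlog : HasDerivAt (fun x => Real.log (h x)) (h' xs / h xs) xs := by
      have := (hderiv xs ⟨hxsab.1.le, hxsab.2.le⟩).log hxspos.ne'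
      exact this
    exact (hasDerivAt_id' xs).add (hlog.const_mul (K / δ))
  have : 1 + (K / δ) * (h' xs / h xs) = 0 := by
    rw [heq]
    field_simp
    ring
  rwa [this] at hd
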